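/- arXiv:1704.00899 — 2 statements merged into one kernel-verified Lean document; each statement's English description precedes it below -/
import Mathlib

section
/- Let G = (A ∪ P, E) be a bipartite graph, M a maximum matching in G, and let H be obtained from G by adding a new vertex a to the A-side together with edges from a to a set N ⊆ P of neighbors. Suppose no vertex of N is even with respect to M in G, and some vertex p ∈ N is unreachable with respect to M in G. Then M is a maximum matching of H, the vertex p is odd with respect to M in H, and the M-partner M(p) of p is even with respect to M in H. -/
open SimpleGraph

variable {V : Type*}

/-- `M` is a matching in the graph `G`: a set of edges of `G` no two of which
share a vertex. -/
def IsMatchingIn (G : SimpleGraph V) (M : Set (Sym2 V)) : Prop :=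
  M ⊆ G.edgeSet ∧ ∀ e ∈ M, ∀ f ∈ M, e ≠ f → ∀ v : V, v ∈ e → v ∉ f

/-- A vertex `v` is matched (covered) by the matching `M`. -/
def IsMatchedBy (M : Set (Sym2 V)) (v : V) : Prop :=
  ∃ e ∈ M, v ∈ e

/-- The list of edges of a path given as a list of vertices. -/
def pathEdges (p : List V) : List (Sym2 V) :=
  (p.zip p.tail).map fun q => s(q.1, q.2)

/-- `p` is an alternating path from `u` to `v` in `G` with respect to the matching `M`:
its consecutive vertices are adjacent in `G`, it repeats no vertex, and its edges
alternate between edges in `M` and edges not in `M`. -/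
def IsAltPath (G : SimpleGraph V) (M : Set (Sym2 V)) (u v : V) (p : List V) : Prop :=
  p.Chain' G.Adj ∧ p.Nodup ∧
    (pathEdges p).Chain' (fun e f => (e ∈ M ↔ f ∉ M)) ∧
    p.head? = some u ∧ p.getLast? = some v

/-- `v` is even with respect to `M`: there is an even-length alternating path from
an `M`-unmatched vertex to `v`. -/
def EvenVtx (G : SimpleGraph V) (M : Set (Sym2 V)) (v : V) : Prop :=
  ∃ u p, ¬ IsMatchedBy M u ∧ IsAltPath G M u v p ∧ Even (pathEdges p).length

/-- `v` is odd with respect to `M`: there is an odd-length alternating path from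
an `M`-unmatched vertex to `v`. -/
def OddVtx (G : SimpleGraph V) (M : Set (Sym2 V)) (v : V) : Prop :=
  ∃ u p, ¬ IsMatchedBy M u ∧ IsAltPath G M u v p ∧ Odd (pathEdges p).length

/-- `v` is unreachable with respect to `M`: there is no alternating path from any
`M`-unmatched vertex to `v`. -/
def UnreachableVtx (G : SimpleGraph V) (M : Set (Sym2 V)) (v : V) : Prop :=
  ¬ ∃ u p, ¬ IsMatchedBy M u ∧ IsAltPath G M u v p

/-- `M` is a maximum (cardinality) matching in `G`. -/
def IsMaxMatching (G : SimpleGraph V) (M : Set (Sym2 V)) : Prop :=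
  IsMatchingIn G M ∧ ∀ N, IsMatchingIn G N → N.ncard ≤ M.ncard

/-- `G` is bipartite with the two sides given by `side`. -/
def IsBipartiteWith (G : SimpleGraph V) (side : V → Bool) : Prop :=
  ∀ u v, G.Adj u v → side u ≠ side v

/-! ### Auxiliary development: alternating walks -/

section AuxWalk

variable {G : SimpleGraph V} {M K : Set (Sym2 V)} {n : V}

lemma matching_unique (hM : IsMatchingIn G M) {e f : Sym2 V} (he : e ∈ M) (hf : f ∈ M)
    {x : V} (hx : x ∈ e) (hx' : x ∈ f) : e = f := by
  by_contra h
  exact hM.2 e he f hf h x hx hx'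

lemma edge_pick (hM : IsMatchingIn G M) {e : Sym2 V} (he : e ∈ M) {v : V} (hv : v ∈ e) :
    ∃ w, e = s(w, v) ∧ G.Adj w v := by
  induction e using Sym2.ind with
  | _ x y =>
    have hadj : G.Adj x y := G.mem_edgeSet.1 (hM.1 he)
    rcases Sym2.mem_iff.1 hv with rfl | rfl
    · exact ⟨y, Sym2.eq_swap, hadj.symm⟩
    · exact ⟨x, rfl, hadj⟩

lemma pathEdges_cons_cons (w v : V) (l : List V) :
    pathEdges (w :: v :: l) = s(w, v) :: pathEdges (v :: l) := rfl

/-- `Alt G M K n b l` : `l` (read from its *last* element `n` to its head) is an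
alternating walk starting at `n`, whose edges alternate between `M \ K` and `K \ M`,
starting with an `M \ K` edge. `b = true` means the next edge to be appended (at the
head) should be an `M \ K` edge. -/
inductive Alt (G : SimpleGraph V) (M K : Set (Sym2 V)) (n : V) : Bool → List V → Prop
  | base : Alt G M K n true [n]
  | stepM {v w : V} {l : List V} : Alt G M K n true (v :: l) → s(w, v) ∈ M → s(w, v) ∉ K →
      G.Adj w v → w ∉ v :: l → Alt G M K n false (w :: v :: l)
  | stepK {v w : V} {l : List V} : Alt G M K n false (v :: l) → s(w, v) ∈ K → s(w, v) ∉ M →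
      G.Adj w v → w ∉ v :: l → Alt G M K n true (w :: v :: l)

namespace Alt

lemma getLast {b : Bool} {l : List V} (h : Alt G M K n b l) : l.getLast? = some n := by
  induction h with
  | base => rfl
  | stepM h _ _ _ _ ih => rw [List.getLast?_cons_cons]; exact ih
  | stepK h _ _ _ _ ih => rw [List.getLast?_cons_cons]; exact ih

lemma chain {b : Bool} {l : List V} (h : Alt G M K n b l) : l.Chain' G.Adj := by
  induction h with
  | base => simp [List.Chain']
  | stepM h _ _ hG _ ih => exact List.isChain_cons_cons.2 ⟨hG, ih⟩
  | stepK h _ _ hG _ ih => exact List.isChain_cons_cons.2 ⟨hG, ih⟩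

lemma nodup {b : Bool} {l : List V} (h : Alt G M K n b l) : l.Nodup := by
  induction h with
  | base => simp
  | stepM h _ _ _ hw ih => exact List.nodup_cons.2 ⟨hw, ih⟩
  | stepK h _ _ _ hw ih => exact List.nodup_cons.2 ⟨hw, ih⟩

lemma pe_chain {b : Bool} {l : List V} (h : Alt G M K n b l) :
    (pathEdges l).Chain' (fun e f => (e ∈ M ↔ f ∉ M)) ∧
      (∀ e, (pathEdges l).head? = some e → (e ∈ M ↔ b = false)) := by
  induction h with
  | base => exact ⟨List.isChain_nil, by intro e he; simp [pathEdges] at he⟩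
  | @stepM v w l h hM hK hG hw ih =>
    rw [pathEdges_cons_cons]
    constructor
    · cases hpe : pathEdges (v :: l) with
      | nil => simp [List.Chain']
      | cons e es =>
        rw [List.Chain', List.isChain_cons_cons]
        refine ⟨?_, hpe ▸ ih.1⟩
        have he : e ∈ M ↔ (true : Bool) = false := ih.2 e (by rw [hpe]; rfl)
        simp only [Bool.true_eq_false, iff_false] at he
        simp [hM, he]
    · intro e he
      simp only [List.head?_cons, Option.some.injEq] at he
      subst he
      simp [hM]
  | @stepK v w l h hK hM hG hw ih =>
    rw [pathEdges_cons_cons]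
    constructor
    · cases hpe : pathEdges (v :: l) with
      | nil => simp [List.Chain']
      | cons e es =>
        rw [List.Chain', List.isChain_cons_cons]
        refine ⟨?_, hpe ▸ ih.1⟩
        have he : e ∈ M ↔ (false : Bool) = false := ih.2 e (by rw [hpe]; rfl)
        simp only [iff_true] at he
        simp [hM, he]
    · intro e he
      simp only [List.head?_cons, Option.some.injEq] at he
      subst he
      simp [hM]

lemma parity {b : Bool} {l : List V} (h : Alt G M K n b l) :
    (pathEdges l).length % 2 = if b then 0 else 1 := by
  induction h with
  | base => rfl
  | stepM h _ _ _ _ ih => rw [pathEdges_cons_cons]; simp only [List.length_cons]; simp at ih ⊢; omega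
  | stepK h _ _ _ _ ih => rw [pathEdges_cons_cons]; simp only [List.length_cons]; simp at ih ⊢; omega

lemma invP (hMm : IsMatchingIn G M) {b : Bool} {l : List V} (h : Alt G M K n b l) :
    ∀ e, e ∈ M → e ∉ K → ∀ x ∈ l, x ∈ e →
      (b = true ∧ ∀ y ∈ l, y ∈ e → l.head? = some y) ∨
      ((∀ y ∈ e, y ∈ l) ∧ (b = true → ∀ v, l.head? = some v → v ∉ e)) := by
  induction h with
  | base =>
    intro e he heK x hx hxe
    left
    refine ⟨rfl, fun y hy hye => ?_⟩
    simp only [List.mem_singleton] at hy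
    subst hy; rfl
  | @stepM v w l h hM hK hG hw ih =>
    intro e he heK x hx hxe
    right
    refine ⟨?_, by simp⟩
    have key : e = s(w, v) → ∀ y ∈ e, y ∈ w :: v :: l := by
      rintro rfl y hy
      rcases Sym2.mem_iff.1 hy with rfl | rfl
      · exact List.mem_cons_self
      · exact List.mem_cons_of_mem _ (List.mem_cons_self)
    rcases List.mem_cons.1 hx with rfl | hx'
    · exact key (matching_unique hMm he hM hxe (Sym2.mem_mk_left _ _))
    · rcases ih e he heK x hx' hxe with ⟨_, hall⟩ | ⟨hsub, _⟩
      · have hxv : x = v := by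
          have := hall x hx' hxe
          simpa using this.symm
        subst hxv
        exact key (matching_unique hMm he hM hxe (Sym2.mem_mk_right _ _))
      · exact fun y hy => List.mem_cons_of_mem _ (hsub y hy)
  | @stepK v w l h hK hM hG hw ih =>
    intro e he heK x hx hxe
    by_cases hwe : w ∈ e
    · left
      refine ⟨rfl, fun y hy hye => ?_⟩
      rcases List.mem_cons.1 hy with rfl | hy'
      · rfl
      · rcases ih e he heK y hy' hye with ⟨hb, _⟩ | ⟨hsub, _⟩
        · exact absurd hb (by simp)
        · exact absurd (hsub w hwe) hw
    · right
      refine ⟨?_, fun _ u hu hue => by simp at hu; subst hu; exact hwe hue⟩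
      rcases List.mem_cons.1 hx with rfl | hx'
      · exact absurd hxe hwe
      · rcases ih e he heK x hx' hxe with ⟨hb, _⟩ | ⟨hsub, _⟩
        · exact absurd hb (by simp)
        · exact fun y hy => List.mem_cons_of_mem _ (hsub y hy)

lemma invQ (hKm : IsMatchingIn G K) (hnK : ¬ IsMatchedBy K n) {b : Bool} {l : List V}
    (h : Alt G M K n b l) :
    ∀ e, e ∈ K → e ∉ M → ∀ x ∈ l, x ∈ e →
      (b = false ∧ ∀ y ∈ l, y ∈ e → l.head? = some y) ∨
      ((∀ y ∈ e, y ∈ l) ∧ (b = false → ∀ v, l.head? = some v → v ∉ e)) := by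
  induction h with
  | base =>
    intro e he heM x hx hxe
    simp only [List.mem_singleton] at hx
    subst hx
    exact absurd ⟨e, he, hxe⟩ hnK
  | @stepM v w l h hM hK hG hw ih =>
    intro e he heM x hx hxe
    by_cases hwe : w ∈ e
    · left
      refine ⟨rfl, fun y hy hye => ?_⟩
      rcases List.mem_cons.1 hy with rfl | hy'
      · rfl
      · rcases ih e he heM y hy' hye with ⟨hb, _⟩ | ⟨hsub, _⟩
        · exact absurd hb (by simp)
        · exact absurd (hsub w hwe) hw
    · right
      refine ⟨?_, fun _ u hu hue => by simp at hu; subst hu; exact hwe hue⟩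
      rcases List.mem_cons.1 hx with rfl | hx'
      · exact absurd hxe hwe
      · rcases ih e he heM x hx' hxe with ⟨hb, _⟩ | ⟨hsub, _⟩
        · exact absurd hb (by simp)
        · exact fun y hy => List.mem_cons_of_mem _ (hsub y hy)
  | @stepK v w l h hK hM hG hw ih =>
    intro e he heM x hx hxe
    right
    refine ⟨?_, by simp⟩
    have key : e = s(w, v) → ∀ y ∈ e, y ∈ w :: v :: l := by
      rintro rfl y hy
      rcases Sym2.mem_iff.1 hy with rfl | rfl
      · exact List.mem_cons_self
      · exact List.mem_cons_of_mem _ (List.mem_cons_self)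
    rcases List.mem_cons.1 hx with rfl | hx'
    · exact key (matching_unique hKm he hK hxe (Sym2.mem_mk_left _ _))
    · rcases ih e he heM x hx' hxe with ⟨_, hall⟩ | ⟨hsub, _⟩
      · have hxv : x = v := by
          have := hall x hx' hxe
          simpa using this.symm
        subst hxv
        exact key (matching_unique hKm he hK hxe (Sym2.mem_mk_right _ _))
      · exact fun y hy => List.mem_cons_of_mem _ (hsub y hy)

lemma freshM (hMm : IsMatchingIn G M) {v : V} {l : List V} (h : Alt G M K n true (v :: l))
    {e : Sym2 V} (he : e ∈ M) (heK : e ∉ K) (hv : v ∈ e) {w : V} (hwe : w ∈ e) (hwv : w ≠ v) :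
    w ∉ v :: l := by
  intro hmem
  rcases h.invP hMm e he heK w hmem hwe with ⟨_, hall⟩ | ⟨_, hhead⟩
  · have := hall w hmem hwe
    simp only [List.head?_cons, Option.some.injEq] at this
    exact hwv this.symm
  · exact hhead rfl v rfl hv

lemma freshK (hKm : IsMatchingIn G K) (hnK : ¬ IsMatchedBy K n) {v : V} {l : List V}
    (h : Alt G M K n false (v :: l))
    {e : Sym2 V} (he : e ∈ K) (heM : e ∉ M) (hv : v ∈ e) {w : V} (hwe : w ∈ e) (hwv : w ≠ v) :
    w ∉ v :: l := by
  intro hmem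
  rcases h.invQ hKm hnK e he heM w hmem hwe with ⟨_, hall⟩ | ⟨_, hhead⟩
  · have := hall w hmem hwe
    simp only [List.head?_cons, Option.some.injEq] at this
    exact hwv this.symm
  · exact hhead rfl v rfl hv

lemma true_medge_notin_K (hKm : IsMatchingIn G K) (hnK : ¬ IsMatchedBy K n)
    {v : V} {l : List V} (h : Alt G M K n true (v :: l))
    {e : Sym2 V} (he : e ∈ M) (hv : v ∈ e) : e ∉ K := by
  intro heK
  cases h with
  | base => exact hnK ⟨e, heK, hv⟩
  | stepK h hK hM hG hw =>
    have : e = s(v, _) := matching_unique hKm heK hK hv (Sym2.mem_mk_left _ _)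
    exact hM (this ▸ he)

lemma false_kedge_notin_M (hMm : IsMatchingIn G M)
    {v : V} {l : List V} (h : Alt G M K n false (v :: l))
    {e : Sym2 V} (he : e ∈ K) (hv : v ∈ e) : e ∉ M := by
  intro heM
  cases h with
  | stepM h hM hK hG hw =>
    have : e = s(v, _) := matching_unique hMm heM hM hv (Sym2.mem_mk_left _ _)
    exact hK (this ▸ he)

end Alt

/-- The key walk lemma: starting from a `K`-unmatched vertex `n`, either there is an
even-length `M`-alternating path witnessing `EvenVtx G M n`, or there is a matching
in `G` strictly bigger than `K`. -/
lemma walk_main [Fintype V] (hMm : IsMatchingIn G M) (hKm : IsMatchingIn G K)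
    (hnK : ¬ IsMatchedBy K n) :
    EvenVtx G M n ∨ ∃ J, IsMatchingIn G J ∧ J.ncard = K.ncard + 1 := by
  suffices h : ∀ (m : ℕ) (l : List V) (v : V), Alt G M K n true (v :: l) →
      (∃ J, IsMatchingIn G J ∧ J.ncard = K.ncard ∧ ¬ IsMatchedBy J v ∧
        (∀ e : Sym2 V, (∀ x ∈ e, x ∉ v :: l) → (e ∈ J ↔ e ∈ K)) ∧
        (∀ x, x ∉ v :: l → (IsMatchedBy J x ↔ IsMatchedBy K x))) →
      Fintype.card V + 1 ≤ (v :: l).length + m →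
      EvenVtx G M n ∨ ∃ J, IsMatchingIn G J ∧ J.ncard = K.ncard + 1 by
    refine h (Fintype.card V) [] n Alt.base
      ⟨K, hKm, rfl, hnK, fun _ _ => Iff.rfl, fun _ _ => Iff.rfl⟩ (by simp)
  intro m
  induction m with
  | zero =>
    intro l v halt _ hlen
    have := halt.nodup.length_le_card
    omega
  | succ m ih =>
    intro l v halt hJpkg hlen
    by_cases hvM : IsMatchedBy M v
    · obtain ⟨e, heM, hve⟩ := hvM
      obtain ⟨w, rfl, hadj⟩ := edge_pick hMm heM hve
      have heK : s(w, v) ∉ K := halt.true_medge_notin_K hKm hnK heM hve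
      have hwv : w ≠ v := hadj.ne
      have hwfresh : w ∉ v :: l :=
        halt.freshM hMm heM heK hve (Sym2.mem_mk_left _ _) hwv
      have halt2 : Alt G M K n false (w :: v :: l) := .stepM halt heM heK hadj hwfresh
      obtain ⟨J, hJm, hJc, hJv, hJe, hJx⟩ := hJpkg
      have hswvJ : s(w, v) ∉ J := fun hmem => hJv ⟨_, hmem, Sym2.mem_mk_right _ _⟩
      by_cases hwK : IsMatchedBy K w
      · -- continue the walk
        obtain ⟨f, hfK, hwf⟩ := hwK
        have hfM : f ∉ M := halt2.false_kedge_notin_M hMm hfK hwf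
        obtain ⟨x, rfl, hadjxw⟩ := edge_pick hKm hfK hwf
        have hxw : x ≠ w := hadjxw.ne
        have hxfresh : x ∉ w :: v :: l :=
          halt2.freshK hKm hnK hfK hfM hwf (Sym2.mem_mk_left _ _) hxw
        have halt3 : Alt G M K n true (x :: w :: v :: l) := .stepK halt2 hfK hfM hadjxw hxfresh
        have hfJ : s(x, w) ∈ J := by
          refine (hJe _ ?_).2 hfK
          intro y hy
          rcases Sym2.mem_iff.1 hy with rfl | rfl
          · exact fun hmem => hxfresh (List.mem_cons_of_mem _ hmem)
          · exact hwfresh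
        -- the updated matching
        set J' : Set (Sym2 V) := insert (s(w, v)) (J \ {s(x, w)}) with hJ'def
        have hxv : x ≠ v := fun hxv => hxfresh (hxv ▸ List.mem_cons_of_mem _ (List.mem_cons_self))
        have hwJonly : ∀ g ∈ J, w ∈ g → g = s(x, w) :=
          fun g hg hwg => matching_unique hJm hg hfJ hwg (Sym2.mem_mk_right _ _)
        have hJ'm : IsMatchingIn G J' := by
          constructor
          · rintro g (rfl | ⟨hg, -⟩)
            · exact G.mem_edgeSet.2 hadj
            · exact hJm.1 hg
          · rintro g1 hg1 g2 hg2 hne y hy1 hy2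
            rcases hg1 with rfl | ⟨hg1, hg1f⟩ <;> rcases hg2 with rfl | ⟨hg2, hg2f⟩
            · exact hne rfl
            · rcases Sym2.mem_iff.1 hy1 with rfl | rfl
              · exact hg2f (hwJonly _ hg2 hy2)
              · exact hJv ⟨_, hg2, hy2⟩
            · rcases Sym2.mem_iff.1 hy2 with rfl | rfl
              · exact hg1f (hwJonly _ hg1 hy1)
              · exact hJv ⟨_, hg1, hy1⟩
            · exact hJm.2 g1 hg1 g2 hg2 hne y hy1 hy2
        have hJ'c : J'.ncard = K.ncard := by
          have h1 : (insert (s(w, v)) (J \ {s(x, w)})).ncard = (J \ {s(x, w)}).ncard + 1 :=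
            Set.ncard_insert_of_notMem (fun h => hswvJ h.1) (Set.toFinite _)
          have h2 : (J \ {s(x, w)}).ncard + 1 = J.ncard :=
            Set.ncard_diff_singleton_add_one hfJ (Set.toFinite _)
          rw [hJ'def, h1]
          omega
        refine ih (w :: v :: l) x halt3 ⟨J', hJ'm, hJ'c, ?_, ?_, ?_⟩ (by simp at hlen ⊢; omega)
        · rintro ⟨g, (rfl | ⟨hg, hgf⟩), hxg⟩
          · rcases Sym2.mem_iff.1 hxg with rfl | rfl
            · exact hxw rfl
            · exact hxv rfl
          · exact hgf (matching_unique hJm hg hfJ hxg (Sym2.mem_mk_left _ _))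
        · intro e' he'
          have hne1 : e' ≠ s(w, v) := fun h =>
            he' w (h ▸ Sym2.mem_mk_left _ _) (List.mem_cons_of_mem _ (List.mem_cons_self))
          have hne2 : e' ≠ s(x, w) := fun h =>
            he' x (h ▸ Sym2.mem_mk_left _ _) (List.mem_cons_self)
          have : e' ∈ J' ↔ e' ∈ J := by
            simp only [hJ'def, Set.mem_insert_iff, Set.mem_diff, Set.mem_singleton_iff]
            constructor
            · rintro (rfl | ⟨h, -⟩)
              · exact absurd rfl hne1
              · exact h
            · exact fun h => Or.inr ⟨h, hne2⟩
          rw [this]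
          exact hJe e' fun y hy hmem =>
            he' y hy (List.mem_cons_of_mem _ (List.mem_cons_of_mem _ hmem))
        · intro y hy
          have hyx : y ≠ x := fun h => hy (h ▸ List.mem_cons_self)
          have hyw : y ≠ w := fun h => hy (h ▸ List.mem_cons_of_mem _ (List.mem_cons_self))
          have hyv : y ≠ v := fun h =>
            hy (h ▸ List.mem_cons_of_mem _ (List.mem_cons_of_mem _ (List.mem_cons_self)))
          have : IsMatchedBy J' y ↔ IsMatchedBy J y := by
            constructor
            · rintro ⟨g, (rfl | ⟨hg, -⟩), hyg⟩
              · rcases Sym2.mem_iff.1 hyg with rfl | rfl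
                · exact absurd rfl hyw
                · exact absurd rfl hyv
              · exact ⟨g, hg, hyg⟩
            · rintro ⟨g, hg, hyg⟩
              have hgf : g ≠ s(x, w) := fun h => by
                rcases Sym2.mem_iff.1 (h ▸ hyg) with rfl | rfl
                · exact hyx rfl
                · exact hyw rfl
              exact ⟨g, Or.inr ⟨hg, hgf⟩, hyg⟩
          rw [this]
          exact hJx y fun hmem => hy (List.mem_cons_of_mem _ (List.mem_cons_of_mem _ hmem))
      · -- found an augmenting configuration: bigger matching
        right
        have hwJ : ¬ IsMatchedBy J w := fun h => hwK ((hJx w hwfresh).1 h)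
        refine ⟨insert (s(w, v)) J, ⟨?_, ?_⟩, ?_⟩
        · rintro g (rfl | hg)
          · exact G.mem_edgeSet.2 hadj
          · exact hJm.1 hg
        · rintro g1 hg1 g2 hg2 hne y hy1 hy2
          rcases hg1 with rfl | hg1 <;> rcases hg2 with rfl | hg2
          · exact hne rfl
          · rcases Sym2.mem_iff.1 hy1 with rfl | rfl
            · exact hwJ ⟨_, hg2, hy2⟩
            · exact hJv ⟨_, hg2, hy2⟩
          · rcases Sym2.mem_iff.1 hy2 with rfl | rfl
            · exact hwJ ⟨_, hg1, hy1⟩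
            · exact hJv ⟨_, hg1, hy1⟩
          · exact hJm.2 g1 hg1 g2 hg2 hne y hy1 hy2
        · rw [Set.ncard_insert_of_notMem hswvJ (Set.toFinite _), hJc]
    · -- Conclusion A: an even alternating path from `v` to `n`
      left
      refine ⟨v, v :: l, hvM, ⟨halt.chain, halt.nodup, halt.pe_chain.1, rfl, halt.getLast⟩, ?_⟩
      have := halt.parity
      simp only [if_pos rfl] at this
      exact Nat.even_iff.2 (by simpa using this)

end AuxWalk

/-- Let `H` be obtained from the bipartite graph `G` by adding a new
vertex `a` on the applicant side (modelled as a vertex isolated in `G`) together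
with edges from `a` to a set `N` of posts, and let `M` be a maximum matching of
`G`. Suppose no vertex of `N` is even with respect to `M` in `G` and some
`p ∈ N` is unreachable with respect to `M` in `G`, with `M`-partner `q`. Then
`M` is a maximum matching of `H`, `p` is odd with respect to `M` in `H`, and `q`
is even with respect to `M` in `H`. -/
theorem add_vertex_unreachable_becomes_odd [Fintype V]
    (G H : SimpleGraph V) (side : V → Bool) (hbip : IsBipartiteWith G side)
    (a : V) (ha : side a = false) (haG : ∀ v, ¬ G.Adj a v)
    (N : Set V) (hNside : ∀ p ∈ N, side p = true)
    (hH : ∀ u v, H.Adj u v ↔ G.Adj u v ∨ (u = a ∧ v ∈ N) ∨ (v = a ∧ u ∈ N))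
    (M : Set (Sym2 V)) (hM : IsMaxMatching G M)
    (hnoeven : ∀ p ∈ N, ¬ EvenVtx G M p)
    (p : V) (hpN : p ∈ N) (hp : UnreachableVtx G M p)
    (q : V) (hq : s(p, q) ∈ M) :
    IsMaxMatching H M ∧ OddVtx H M p ∧ EvenVtx H M q := by
  have hle : ∀ u v, G.Adj u v → H.Adj u v := fun u v huv => (hH u v).2 (Or.inl huv)
  have haM : ¬ IsMatchedBy M a := by
    rintro ⟨e, heM, hae⟩
    obtain ⟨w, rfl, hadj⟩ := edge_pick hM.1 heM hae
    exact haG w hadj.symm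
  have hap : a ≠ p := fun h => by simp [h, hNside p hpN] at ha
  have hGpq : G.Adj p q := G.mem_edgeSet.1 (hM.1.1 hq)
  have hpq : p ≠ q := hGpq.ne
  have haq : a ≠ q := fun h => haM ⟨s(p, q), hq, h ▸ Sym2.mem_mk_right _ _⟩
  have hHap : H.Adj a p := (hH a p).2 (Or.inr (Or.inl ⟨rfl, hpN⟩))
  have hsapM : s(a, p) ∉ M := fun h => haM ⟨_, h, Sym2.mem_mk_left _ _⟩
  refine ⟨⟨⟨fun e he => ?_, hM.1.2⟩, ?_⟩, ?_, ?_⟩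
  · -- M is a matching in H
    induction e using Sym2.ind with
    | _ x y => exact H.mem_edgeSet.2 (hle x y (G.mem_edgeSet.1 (hM.1.1 he)))
  · -- maximality in H
    intro N' hN'
    have hGedge : ∀ g ∈ N', a ∉ g → g ∈ G.edgeSet := by
      intro g hg hag
      induction g using Sym2.ind with
      | _ x y =>
        have hadj : H.Adj x y := H.mem_edgeSet.1 (hN'.1 hg)
        rcases (hH x y).1 hadj with h | ⟨rfl, _⟩ | ⟨rfl, _⟩
        · exact G.mem_edgeSet.2 h
        · exact absurd (Sym2.mem_mk_left _ _) hag
        · exact absurd (Sym2.mem_mk_right _ _) hag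
    by_cases hcase : ∃ e ∈ N', a ∈ e
    · obtain ⟨e₀, he₀, hae₀⟩ := hcase
      obtain ⟨n', he₀eq, hadj⟩ := edge_pick hN' he₀ hae₀
      have hn'a : n' ≠ a := hadj.ne
      have hn'N : n' ∈ N := by
        rcases (hH n' a).1 hadj with h | ⟨rfl, _⟩ | ⟨_, h⟩
        · exact absurd h.symm (haG n')
        · exact absurd rfl hn'a
        · exact h
      set K : Set (Sym2 V) := N' \ {e₀} with hKdef
      have hKm : IsMatchingIn G K := by
        constructor
        · rintro g ⟨hg, hgne⟩
          refine hGedge g hg fun hag => ?_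
          exact hN'.2 g hg e₀ he₀ (by simpa using hgne) a hag hae₀
        · rintro g1 ⟨hg1, -⟩ g2 ⟨hg2, -⟩ hne x
          exact hN'.2 g1 hg1 g2 hg2 hne x
      have hn'K : ¬ IsMatchedBy K n' := by
        rintro ⟨g, ⟨hg, hgne⟩, hn'g⟩
        exact hN'.2 g hg e₀ he₀ (by simpa using hgne) n' hn'g (he₀eq ▸ Sym2.mem_mk_left _ _)
      have hcard : K.ncard + 1 = N'.ncard := Set.ncard_diff_singleton_add_one he₀ (Set.toFinite _)
      rcases walk_main hM.1 hKm hn'K with heven | ⟨J, hJm, hJc⟩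
      · exact absurd heven (hnoeven n' hn'N)
      · have := hM.2 J hJm
        omega
    · push_neg at hcase
      exact hM.2 N' ⟨fun g hg => hGedge g hg (hcase g hg), hN'.2⟩
  · -- p is odd in H via the path [a, p]
    refine ⟨a, [a, p], haM, ⟨?_, ?_, ?_, rfl, ?_⟩, ?_⟩
    · simp [List.Chain', hHap]
    · simp [hap]
    · simp [pathEdges, List.Chain']
    · simp
    · simp [pathEdges]
  · -- q is even in H via the path [a, p, q]
    refine ⟨a, [a, p, q], haM, ⟨?_, ?_, ?_, rfl, ?_⟩, ?_⟩
    · simp [List.Chain', hHap, hle p q hGpq]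
    · simp [hap, haq, hpq]
    · simp [pathEdges, List.Chain', List.isChain_cons_cons, hsapM, hq]
    · simp
    · simp [pathEdges]
end

section
/- Let G = (A ∪ P, E) be a bipartite graph, M a maximum matching in G, let a be a vertex matched in M with partner p = M(a), and let H be obtained from G by deleting a and all edges incident on a. Then the maximum matching size of H equals the maximum matching size of G if and only if p is odd with respect to M in G; and if p is even or unreachable with respect to M in G, then M \ {(a, p)} is a maximum matching of H (so the maximum matching size drops by exactly one). -/
open SimpleGraph

variable {V : Type*}

/-- The maximum matching size of `G`. -/
noncomputable def matchNum (G : SimpleGraph V) : ℕ :=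
  sSup {n | ∃ M, IsMatchingIn G M ∧ n = M.ncard}

lemma pathEdges_length (l : List V) : (pathEdges l).length = l.length - 1 := by
  simp [pathEdges]

lemma pathEdges_getElem (l : List V) (t : ℕ) (h : t < (pathEdges l).length) :
    (pathEdges l)[t] = s(l[t]'(by simp [pathEdges_length] at h; omega),
      l[t+1]'(by simp [pathEdges_length] at h; omega)) := by
  simp [pathEdges]

lemma chain'_alt_pattern (M : Set (Sym2 V)) (L : List (Sym2 V))
    (hc : L.Chain' (fun e f => (e ∈ M ↔ f ∉ M)))
    (h0 : ∀ h : 0 < L.length, L[0] ∉ M) :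
    ∀ t (h : t < L.length), (L[t] ∈ M ↔ t % 2 = 1) := by
  intro t
  induction t with
  | zero => intro h; simpa using h0 h
  | succ n ih =>
    intro h
    have hn := ih (by omega)
    have hstep := List.isChain_iff_getElem.1 hc n (by omega)
    by_cases hpar : n % 2 = 1
    · have : L[n] ∈ M := hn.2 hpar
      constructor
      · intro hm; exact absurd hm (hstep.1 this)
      · intro hp; omega
    · have h1 : L[n] ∉ M := fun hm => hpar (hn.1 hm)
      have : L[n+1] ∈ M := by
        by_contra hno
        exact h1 (hstep.2 hno)
      constructor
      · intro _; omega
      · intro _; exact this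

lemma pattern_chain'_alt (M : Set (Sym2 V)) (L : List (Sym2 V))
    (hpat : ∀ t (h : t < L.length), (L[t] ∈ M ↔ t % 2 = 1)) :
    L.Chain' (fun e f => (e ∈ M ↔ f ∉ M)) := by
  change List.IsChain _ _
  rw [List.isChain_iff_getElem]
  intro i h
  have h1 := hpat i (by omega)
  have h2 := hpat (i+1) (by omega)
  constructor
  · intro hm hm2
    have := h1.1 hm; have := h2.1 hm2; omega
  · intro hn
    apply h1.2
    by_contra hpar
    exact hn (h2.2 (by omega))

lemma countP_alt {α : Type*} (P : α → Bool) (L : List α)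
    (hpat : ∀ t (h : t < L.length), (P L[t] = true ↔ t % 2 = 1)) :
    L.countP P = L.length / 2 := by
  match L with
  | [] => simp
  | [x] =>
    have := hpat 0 (by simp)
    simp at this
    simp [List.countP_cons, this]
  | x :: y :: t =>
    have hx : ¬ P x = true := by have := hpat 0 (by simp); simpa using this
    have hy : P y = true := by have := hpat 1 (by simp); simpa using this.2 rfl
    have ht : t.countP P = t.length / 2 := by
      apply countP_alt P t
      intro s hs
      have := hpat (s+2) (by simp; omega)
      simpa [Nat.add_mod_right] using this
    simp [List.countP_cons, hx, hy, ht]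
    omega
termination_by L.length

lemma pathEdges_nodup (W : List V) (hnd : W.Nodup) : (pathEdges W).Nodup := by
  rw [List.nodup_iff_injective_get]
  intro ⟨i, hi⟩ ⟨j, hj⟩ hij
  simp only [List.get_eq_getElem, pathEdges_getElem] at hij
  have hi' : i < W.length - 1 := by simpa [pathEdges_length] using hi
  have hj' : j < W.length - 1 := by simpa [pathEdges_length] using hj
  rcases Sym2.eq_iff.1 hij with ⟨h1, h2⟩ | ⟨h1, h2⟩
  · have := (hnd.getElem_inj_iff).1 h1; simp [this]
  · have e1 := (hnd.getElem_inj_iff).1 h1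
    have e2 := (hnd.getElem_inj_iff).1 h2
    omega

lemma mem_pathEdges_vertex (W : List V) (v : V) (e : Sym2 V) (he : e ∈ pathEdges W)
    (hv : v ∈ e) : v ∈ W := by
  rcases List.mem_iff_getElem.1 he with ⟨t, ht, rfl⟩
  rw [pathEdges_getElem] at hv
  rcases Sym2.mem_iff.1 hv with rfl | rfl <;> exact List.getElem_mem _

lemma aug_lemma [Fintype V] (G : SimpleGraph V) (N : Set (Sym2 V)) (hN : IsMatchingIn G N)
    (W : List V) (hlen2 : 2 ≤ W.length) (heven : W.length % 2 = 0) (hnd : W.Nodup)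
    (hadj : ∀ t (h : t + 1 < W.length), G.Adj (W[t]'(by omega)) (W[t+1]'h))
    (halt : ∀ t (h : t + 1 < W.length), (s(W[t]'(by omega), W[t+1]'h) ∈ N ↔ t % 2 = 1))
    (h0 : ¬ IsMatchedBy N (W[0]'(by omega)))
    (h1 : ¬ IsMatchedBy N (W[W.length - 1]'(by omega))) :
    ∃ N', IsMatchingIn G N' ∧ N'.ncard = N.ncard + 1 ∧
      ∀ v : V, (∀ e ∈ N, v ∉ e) → v ∉ W → ∀ e ∈ N', v ∉ e := by
  classical
  set n := W.length with hn
  set LE := pathEdges W with hLE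
  have hLEn : LE.length = n - 1 := pathEdges_length W
  have hLEget : ∀ t (h : t < LE.length), LE[t] = s(W[t]'(by omega : t < n), W[t+1]'(by omega : t + 1 < n)) := by
    intro t h; exact pathEdges_getElem W t h
  have haltE : ∀ t (h : t < LE.length), (LE[t] ∈ N ↔ t % 2 = 1) := by
    intro t h; rw [hLEget t h]; exact halt t (by omega)
  set El : Set (Sym2 V) := {e | e ∈ LE} with hEl
  -- vertices of edges determine positions
  have hpos : ∀ (i t : ℕ) (hi : i < n) (ht : t < LE.length), W[i] ∈ LE[t] → i = t ∨ i = t + 1 := by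
    intro i t hi ht hmem
    rw [hLEget t ht] at hmem
    rcases Sym2.mem_iff.1 hmem with h | h
    · left; exact (hnd.getElem_inj_iff).1 h
    · right; exact (hnd.getElem_inj_iff).1 h
  -- N edges covering an interior path vertex lie on the path
  have hinterior : ∀ (i : ℕ) (hi : i < n) (e : Sym2 V), e ∈ N → W[i] ∈ e → e ∈ El := by
    intro i hi e heN hie
    have hi0 : i ≠ 0 := by
      rintro rfl; exact h0 ⟨e, heN, hie⟩
    have hin : i ≠ n - 1 := by
      rintro rfl; exact h1 ⟨e, heN, hie⟩
    -- the odd-indexed edge among i-1, i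
    obtain ⟨t, htodd, htlt, htv⟩ :
        ∃ t, t % 2 = 1 ∧ ∃ htlt : t < LE.length, W[i] ∈ LE[t] := by
      by_cases hpar : i % 2 = 1
      · refine ⟨i, hpar, by omega, ?_⟩
        rw [hLEget i (by omega)]
        rw [Sym2.mem_iff]; left; rfl
      · refine ⟨i - 1, by omega, by omega, ?_⟩
        rw [hLEget (i-1) (by omega)]
        have hix : W[i - 1 + 1]'(by omega) = W[i]'hi := by congr 1; omega
        rw [Sym2.mem_iff]; right; exact hix.symm
    have htN : LE[t] ∈ N := (haltE t htlt).2 htodd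
    have : e = LE[t] := by
      by_contra hne
      exact hN.2 e heN LE[t] htN hne _ hie htv
    rw [this]; exact List.getElem_mem htlt
  have hElsub : El ⊆ G.edgeSet := by
    intro e he
    rcases List.mem_iff_getElem.1 he with ⟨t, ht, rfl⟩
    rw [hLEget t ht, SimpleGraph.mem_edgeSet]
    exact hadj t (by omega)
  refine ⟨(N \ El) ∪ (El \ N), ⟨?_, ?_⟩, ?_, ?_⟩
  · intro e he
    rcases he with he | he
    · exact hN.1 he.1
    · exact hElsub he.1
  · intro e he f hf hef v hve hvf
    rcases he with he | he <;> rcases hf with hf | hf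
    · exact hN.2 e he.1 f hf.1 hef v hve hvf
    · -- e ∈ N \ El, f ∈ El \ N
      rcases List.mem_iff_getElem.1 hf.1 with ⟨t, ht, hft⟩
      have hvW : ∃ i, ∃ hi : i < n, W[i] = v := by
        have : v ∈ W := mem_pathEdges_vertex W v f hf.1 hvf
        exact List.mem_iff_getElem.1 this
      rcases hvW with ⟨i, hi, rfl⟩
      exact he.2 (hinterior i hi e he.1 hve)
    · rcases List.mem_iff_getElem.1 he.1 with ⟨t, ht, het⟩
      have hvW : ∃ i, ∃ hi : i < n, W[i] = v := by
        have : v ∈ W := mem_pathEdges_vertex W v e he.1 hve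
        exact List.mem_iff_getElem.1 this
      rcases hvW with ⟨i, hi, rfl⟩
      exact hf.2 (hinterior i hi f hf.1 hvf)
    · -- both in El \ N : both have even indices, but they share vertex v
      rcases List.mem_iff_getElem.1 he.1 with ⟨t1, ht1, het⟩
      rcases List.mem_iff_getElem.1 hf.1 with ⟨t2, ht2, hft⟩
      have hvW : ∃ i, ∃ hi : i < n, W[i] = v := by
        have : v ∈ W := mem_pathEdges_vertex W v e he.1 hve
        exact List.mem_iff_getElem.1 this
      rcases hvW with ⟨i, hi, rfl⟩
      have hp1 : i = t1 ∨ i = t1 + 1 := hpos i t1 hi ht1 (by rw [het]; exact hve)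
      have hp2 : i = t2 ∨ i = t2 + 1 := hpos i t2 hi ht2 (by rw [hft]; exact hvf)
      have he1 : ¬ t1 % 2 = 1 := fun hodd => he.2 (het ▸ (haltE t1 ht1).2 hodd)
      have he2 : ¬ t2 % 2 = 1 := fun hodd => hf.2 (hft ▸ (haltE t2 ht2).2 hodd)
      have hne : t1 ≠ t2 := by
        intro h; apply hef; rw [← het, ← hft]; congr 1
      omega
  · -- cardinality
    have hfin : ∀ S : Set (Sym2 V), S.Finite := fun S => Set.toFinite S
    have hdisj : Disjoint (N \ El) (El \ N) := by
      rw [Set.disjoint_iff]; intro e ⟨h1, h2⟩; exact absurd h1.1 h2.2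
    rw [Set.ncard_union_eq hdisj (hfin _) (hfin _)]
    have hsplit : (N \ El).ncard + (N ∩ El).ncard = N.ncard := by
      rw [← Set.diff_self_inter]
      exact Set.ncard_diff_add_ncard_of_subset Set.inter_subset_left (hfin _)
    have hndLE : LE.Nodup := pathEdges_nodup W hnd
    set P : Sym2 V → Bool := fun e => decide (e ∈ N) with hP
    have hcount : LE.countP P = LE.length / 2 := by
      apply countP_alt
      intro t ht
      simp only [hP, decide_eq_true_eq]
      exact haltE t ht
    have hinterEq : N ∩ El = {x | x ∈ LE.filter P} := by
      ext e
      simp only [Set.mem_inter_iff, Set.mem_setOf_eq, List.mem_filter, hP, decide_eq_true_eq, hEl]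
      tauto
    have hdiffEq : El \ N = {x | x ∈ LE.filter (fun e => !P e)} := by
      ext e
      simp only [Set.mem_diff, Set.mem_setOf_eq, List.mem_filter, hP, hEl, Bool.not_eq_true',
        decide_eq_false_iff_not]
    have hcard1 : (N ∩ El).ncard = (n-1) / 2 := by
      rw [hinterEq, ← List.coe_toFinset, Set.ncard_coe_finset,
        List.toFinset_card_of_nodup (hndLE.filter _), ← List.countP_eq_length_filter, hcount, hLEn]
    have hcard2 : (El \ N).ncard = (n-1) - (n-1) / 2 := by
      rw [hdiffEq, ← List.coe_toFinset, Set.ncard_coe_finset,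
        List.toFinset_card_of_nodup (hndLE.filter _), ← List.countP_eq_length_filter]
      have hlen := List.length_eq_countP_add_countP P (l := LE)
      have h2 : List.countP (fun a => decide ¬P a = true) LE = List.countP (fun e => !P e) LE := by
        congr 1; funext a; simp
      rw [h2] at hlen; omega
    rw [hcard2]
    omega
  · intro v hvN hvW e he hve
    rcases he with he | he
    · exact hvN e he.1 hve
    · exact hvW (mem_pathEdges_vertex W v e he.1 hve)

set_option maxHeartbeats 1000000 in
lemma splice_lemma [Fintype V] (G : SimpleGraph V) (side : V → Bool)
    (hbip : IsBipartiteWith G side)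
    (M : Set (Sym2 V)) (hM : IsMaxMatching G M)
    (W : List V) (hlen2 : 2 ≤ W.length) (heven : W.length % 2 = 0)
    (hadj : ∀ t (h : t + 1 < W.length), G.Adj (W[t]'(by omega)) (W[t+1]'h))
    (halt : ∀ t (h : t + 1 < W.length), (s(W[t]'(by omega), W[t+1]'h) ∈ M ↔ t % 2 = 1))
    (h0 : ¬ IsMatchedBy M (W[0]'(by omega)))
    (h1 : ¬ IsMatchedBy M (W[W.length - 1]'(by omega))) : False := by
  by_cases hnd : W.Nodup
  · obtain ⟨N', hN', hcard, -⟩ := aug_lemma G M hM.1 W hlen2 heven hnd hadj halt h0 h1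
    have := hM.2 N' hN'
    omega
  · obtain ⟨i, j, hij, hj, heq⟩ :
        ∃ i j, ∃ (hij : i < j) (hj : j < W.length), W[i]'(by omega) = W[j]'hj := by
      rw [List.nodup_iff_injective_get, Function.not_injective_iff] at hnd
      obtain ⟨⟨i, hi⟩, ⟨j, hj⟩, heq, hne⟩ := hnd
      simp only [List.get_eq_getElem] at heq
      rcases lt_trichotomy i j with h | h | h
      · exact ⟨i, j, h, hj, heq⟩
      · exact absurd (by simpa using h) hne
      · exact ⟨j, i, h, hi, heq.symm⟩
    set n := W.length with hn
    have hstep : ∀ t (h : t + 1 < n), side (W[t+1]'h) = !side (W[t]'(by omega)) := by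
      intro t h
      have := hbip _ _ (hadj t h)
      cases hA : side (W[t+1]'h) <;> cases hB : side (W[t]'(by omega : t < n)) <;> simp_all
    have hside : ∀ t (h : t < n),
        side (W[t]'h) = Bool.xor (decide (t % 2 = 1)) (side (W[0]'(by omega))) := by
      intro t
      induction t with
      | zero => intro h; simp
      | succ s ih =>
        intro h
        rw [hstep s h, ih (by omega)]
        by_cases hp : s % 2 = 1
        · have h2 : (s+1) % 2 = 0 := by omega
          simp [hp, h2]
        · have h2 : (s+1) % 2 = 1 := by omega
          have h3 : ¬ (s % 2 = 1) := hp
          simp [h2, h3]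
    have hpar : i % 2 = j % 2 := by
      have h1' := hside i (by omega)
      have h2' := hside j hj
      rw [heq, h2'] at h1'
      by_cases hpi : i % 2 = 1 <;> by_cases hpj : j % 2 = 1 <;> simp [hpi, hpj] at h1' ⊢ <;> omega
    have hne0 : ¬ (i = 0 ∧ j = n - 1) := by
      rintro ⟨rfl, rfl⟩
      omega
    have hlenX : (W.take (i+1) ++ W.drop (j+1)).length = n - (j - i) := by
      simp [List.length_take, List.length_drop]
      omega
    have hget1 : ∀ t (h : t ≤ i),
        (W.take (i+1) ++ W.drop (j+1))[t]'(by rw [hlenX]; omega) = W[t]'(by omega) := by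
      intro t h
      rw [List.getElem_append]
      have htake : t < (W.take (i+1)).length := by
        simp [List.length_take]; omega
      rw [dif_pos htake, List.getElem_take]
    have hget2 : ∀ t (h : i < t) (h2 : t < n - (j - i)),
        (W.take (i+1) ++ W.drop (j+1))[t]'(by rw [hlenX]; omega) = W[t + (j - i)]'(by omega) := by
      intro t h h2
      rw [List.getElem_append]
      have htake : ¬ (t < (W.take (i+1)).length) := by
        simp [List.length_take]; omega
      rw [dif_neg htake, List.getElem_drop]
      congr 1
      simp [List.length_take]
      omega
    have hpair : ∀ t (h : t + 1 < n - (j - i)), ∃ s, ∃ hs : s + 1 < n,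
        s % 2 = t % 2 ∧ (W.take (i+1) ++ W.drop (j+1))[t]'(by rw [hlenX]; omega) = W[s]'(by omega) ∧
          (W.take (i+1) ++ W.drop (j+1))[t+1]'(by rw [hlenX]; omega) = W[s+1]'hs := by
      intro t h
      by_cases ht : t + 1 ≤ i
      · exact ⟨t, by omega, rfl, hget1 t (by omega), hget1 (t+1) ht⟩
      · by_cases ht2 : t ≤ i
        · have hti : t = i := by omega
          subst hti
          refine ⟨j, by omega, by omega, ?_, ?_⟩
          · rw [hget1 t le_rfl]; exact heq
          · rw [hget2 (t+1) (by omega) h]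
            congr 1
            omega
        · refine ⟨t + (j - i), by omega, by omega, hget2 t (by omega) (by omega), ?_⟩
          rw [hget2 (t+1) (by omega) h]
          congr 1
          omega
    have hlast' : (W.take (i+1) ++ W.drop (j+1))[(n - (j-i)) - 1]'(by rw [hlenX]; omega)
        = W[n-1]'(by omega) := by
      by_cases hl : (n - (j-i)) - 1 ≤ i
      · have hjn : j = n - 1 := by omega
        have hidx : (n - (j-i)) - 1 = i := by omega
        rw [hget1 _ hl]
        simp only [hidx]
        simp only [hjn] at heq
        exact heq
      · rw [hget2 _ (by omega) (by omega)]
        congr 1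
        omega
    refine splice_lemma G side hbip M hM (W.take (i+1) ++ W.drop (j+1))
      (by omega) (by omega) ?_ ?_ ?_ ?_
    · intro t h
      rw [hlenX] at h
      obtain ⟨s, hs, hpar', he1, he2⟩ := hpair t h
      rw [he1, he2]
      exact hadj s hs
    · intro t h
      rw [hlenX] at h
      obtain ⟨s, hs, hpar', he1, he2⟩ := hpair t h
      rw [he1, he2, halt s hs]
      omega
    · rw [hget1 0 (by omega)]; exact h0
    · simp only [hlenX]
      rw [hlast']
      exact h1
termination_by W.length
decreasing_by simp only [List.length_append, List.length_take, List.length_drop]; omega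

lemma head?_eq_getElem (L : List V) (h : 0 < L.length) : L.head? = some (L[0]) := by
  cases L with
  | nil => simp at h
  | cons x t => rfl

lemma getLast?_eq_getElem (L : List V) (h : 0 < L.length) :
    L.getLast? = some (L[L.length - 1]) := by
  have hne : L ≠ [] := by intro hh; subst hh; simp at h
  rw [List.getLast?_eq_getLast hne, List.getLast_eq_getElem]

lemma exists_oddVtx [Fintype V] (G : SimpleGraph V) (M : Set (Sym2 V)) (hM : IsMaxMatching G M)
    (N : Set (Sym2 V)) (hN : IsMatchingIn G N) (hcard : M.ncard ≤ N.ncard)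
    (a p : V) (hap : s(a,p) ∈ M) (haN : ∀ e ∈ N, a ∉ e) : OddVtx G M p := by
  classical
  have hMuniq : ∀ (v : V) (e f : Sym2 V), e ∈ M → f ∈ M → v ∈ e → v ∈ f → e = f := by
    intro v e f he hf hve hvf
    by_contra hne
    exact hM.1.2 e he f hf hne v hve hvf
  have hNuniq : ∀ (v : V) (e f : Sym2 V), e ∈ N → f ∈ N → v ∈ e → v ∈ f → e = f := by
    intro v e f he hf hve hvf
    by_contra hne
    exact hN.2 e he f hf hne v hve hvf
  have hapG : G.Adj a p := (SimpleGraph.mem_edgeSet G).1 (hM.1.1 hap)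
  have hane : a ≠ p := hapG.ne
  have hsapN : s(a,p) ∉ N := fun h => haN _ h (by rw [Sym2.mem_iff]; left; rfl)
  -- the set of lengths of good alternating walks starting at `a`
  set T : Set ℕ := {m | ∃ l : List V, (l.Nodup ∧ 2 ≤ l.length ∧ l.head? = some a ∧
      ∀ t (h : t + 1 < l.length),
        (s(l[t]'(by omega), l[t+1]'h) ∈ M ↔ t % 2 = 0) ∧
        (s(l[t]'(by omega), l[t+1]'h) ∈ N ↔ t % 2 = 1)) ∧ l.length = m} with hT
  have hTne : T.Nonempty := by
    refine ⟨2, [a, p], ⟨by simp [hane], by simp, rfl, ?_⟩, by simp⟩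
    intro t h
    have ht0 : t = 0 := by simp at h; omega
    subst ht0
    simp [hap, hsapN]
  have hTbdd : BddAbove T := by
    refine ⟨Fintype.card V, ?_⟩
    rintro m ⟨l, hl, rfl⟩
    exact hl.1.length_le_card
  obtain ⟨l, ⟨hnd, hlen2, hhead, hedge⟩, hmax⟩ :
      ∃ l : List V, (l.Nodup ∧ 2 ≤ l.length ∧ l.head? = some a ∧
        ∀ t (h : t + 1 < l.length),
          (s(l[t]'(by omega), l[t+1]'h) ∈ M ↔ t % 2 = 0) ∧
          (s(l[t]'(by omega), l[t+1]'h) ∈ N ↔ t % 2 = 1)) ∧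
        (∀ m ∈ T, m ≤ l.length) := by
    have hmem := Nat.sSup_mem hTne hTbdd
    rw [hT] at hmem
    obtain ⟨l, hl, hlen⟩ := hmem
    exact ⟨l, hl, fun m hm => hlen ▸ le_csSup hTbdd hm⟩
  set n := l.length with hn
  have hidx : ∀ (i j : ℕ) (hi : i < n) (hj : j < n), i = j → l[i]'hi = l[j]'hj := by
    intro i j hi hj h
    subst h
    rfl
  have ha0 : l[0]'(by omega) = a := by
    have := head?_eq_getElem l (by omega)
    rw [hhead] at this
    exact (Option.some_inj.1 this).symm
  have hadjl : ∀ t (h : t + 1 < n), G.Adj (l[t]'(by omega)) (l[t+1]'h) := by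
    intro t h
    have := hedge t h
    by_cases hp : t % 2 = 0
    · exact (SimpleGraph.mem_edgeSet G).1 (hM.1.1 (this.1.2 hp))
    · exact (SimpleGraph.mem_edgeSet G).1 (hN.1 (this.2.2 (by omega)))
  have hl1 : l[1]'(by omega) = p := by
    have h0 := (hedge 0 (by omega)).1.2 rfl
    rw [ha0] at h0
    have := hMuniq a _ _ h0 hap (by rw [Sym2.mem_iff]; left; rfl) (by rw [Sym2.mem_iff]; left; rfl)
    exact Sym2.congr_right.1 this
  -- extension is impossible at the end of a maximal walk
  have hext : ∀ w, w ∉ l →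
      (s(l[n-1]'(by omega), w) ∈ M ↔ (n-1) % 2 = 0) →
      (s(l[n-1]'(by omega), w) ∈ N ↔ (n-1) % 2 = 1) → False := by
    intro w hw hMw hNw
    have hlen' : (l ++ [w]).length = n + 1 := by
      simp [← hn]
    have hgA : ∀ t (h : t < n), (l ++ [w])[t]'(by rw [hlen']; omega) = l[t]'h := by
      intro t h
      rw [List.getElem_append]
      exact dif_pos h
    have hgB : (l ++ [w])[n]'(by rw [hlen']; omega) = w := List.getElem_concat_length rfl _
    have : n + 1 ∈ T := by
      refine ⟨l ++ [w], ⟨?_, by rw [hlen']; omega, ?_, ?_⟩, hlen'⟩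
      · rw [List.nodup_append]
        exact ⟨hnd, by simp, by intro x hx y hy hxy; simp at hy; subst hy; subst hxy; exact hw hx⟩
      · have h0 : 0 < (l ++ [w]).length := by rw [hlen']; omega
        rw [head?_eq_getElem _ h0, hgA 0 (by omega)]
        exact congrArg some ha0
      · intro t h
        rw [hlen'] at h
        by_cases htn : t + 1 < n
        · rw [hgA t (by omega), hgA (t+1) htn]
          exact hedge t htn
        · have ht : t = n - 1 := by omega
          subst ht
          have e1 : (l ++ [w])[n-1]'(by rw [hlen']; omega) = l[n-1]'(by omega) := hgA (n-1) (by omega)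
          have e2 : (l ++ [w])[n-1+1]'(by rw [hlen']; omega) = w := by
            have hq : n - 1 + 1 = n := by omega
            simp only [hq]
            exact hgB
          rw [e1, e2]
          exact ⟨hMw, hNw⟩
    have := hmax (n + 1) this
    omega
  -- interior vertices: their M-edge and N-edge lie on the walk
  have hMint : ∀ (jj : ℕ) (hjj : jj < n) (e : Sym2 V), 1 ≤ jj → jj ≤ n - 2 → e ∈ M →
      (l[jj]'hjj) ∈ e → ∃ t, t % 2 = 0 ∧ ∃ ht : t + 1 < n, e = s(l[t]'(by omega), l[t+1]'ht) := by
    intro jj hjj e h1 h2 heM hje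
    obtain ⟨t, hteven, htlt, htv⟩ :
        ∃ t, t % 2 = 0 ∧ ∃ htlt : t + 1 < n, (l[jj]'hjj) ∈ s(l[t]'(by omega), l[t+1]'htlt) := by
      by_cases hpar : jj % 2 = 0
      · refine ⟨jj, hpar, by omega, ?_⟩
        rw [Sym2.mem_iff]; left; rfl
      · refine ⟨jj - 1, by omega, by omega, ?_⟩
        rw [Sym2.mem_iff]; right
        exact (hidx jj (jj - 1 + 1) hjj (by omega) (by omega)).symm ▸ rfl
    have hteM : s(l[t]'(by omega), l[t+1]'htlt) ∈ M := (hedge t htlt).1.2 hteven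
    exact ⟨t, hteven, htlt, hMuniq _ e _ heM hteM hje htv⟩
  have hNint : ∀ (jj : ℕ) (hjj : jj < n) (e : Sym2 V), 1 ≤ jj → jj ≤ n - 2 → e ∈ N →
      (l[jj]'hjj) ∈ e → ∃ t, t % 2 = 1 ∧ ∃ ht : t + 1 < n, e = s(l[t]'(by omega), l[t+1]'ht) := by
    intro jj hjj e h1 h2 heN hje
    obtain ⟨t, htodd, htlt, htv⟩ :
        ∃ t, t % 2 = 1 ∧ ∃ htlt : t + 1 < n, (l[jj]'hjj) ∈ s(l[t]'(by omega), l[t+1]'htlt) := by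
      by_cases hpar : jj % 2 = 1
      · refine ⟨jj, hpar, by omega, ?_⟩
        rw [Sym2.mem_iff]; left; rfl
      · refine ⟨jj - 1, by omega, by omega, ?_⟩
        rw [Sym2.mem_iff]; right
        exact (hidx jj (jj - 1 + 1) hjj (by omega) (by omega)).symm ▸ rfl
    have hteN : s(l[t]'(by omega), l[t+1]'htlt) ∈ N := (hedge t htlt).2.2 htodd
    exact ⟨t, htodd, htlt, hNuniq _ e _ heN hteN hje htv⟩
  by_cases hnp : n % 2 = 0
  · -- walk ended after an N-edge is impossible: endpoint would be N-unmatched,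
    -- giving an N-augmenting path
    exfalso
    have hzN : ¬ IsMatchedBy N (l[n-1]'(by omega)) := by
      rintro ⟨e, heN, hze⟩
      have h2 := hedge (n-2) (by omega)
      have heq := hidx (n-2+1) (n-1) (by omega) (by omega) (by omega)
      rw [heq] at h2
      have hlastM : s(l[n-2]'(by omega), l[n-1]'(by omega)) ∈ M := h2.1.2 (by omega)
      have hlastN : s(l[n-2]'(by omega), l[n-1]'(by omega)) ∉ N := by
        intro hc
        have := h2.2.1 hc
        omega
      have heM : e ∉ M := by
        intro heM
        have := hMuniq (l[n-1]'(by omega)) e _ heM hlastM hze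
          (by rw [Sym2.mem_iff]; right; rfl)
        rw [this] at heN
        exact hlastN heN
      obtain ⟨w, rfl⟩ := Sym2.mem_iff_exists.1 hze
      have hzw : l[n-1]'(by omega) ≠ w := ((SimpleGraph.mem_edgeSet G).1 (hN.1 heN)).ne
      have hwl : w ∉ l := by
        intro hwl
        obtain ⟨jj, hjj, hjw⟩ := List.mem_iff_getElem.1 hwl
        have hjj0 : jj ≠ 0 := by
          intro h0
          subst h0
          rw [ha0] at hjw
          exact haN _ heN (by rw [← hjw, Sym2.mem_iff]; right; rfl)
        have hjjn : jj ≠ n - 1 := by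
          intro hn1
          apply hzw
          rw [← hjw]
          exact (hidx (n-1) jj (by omega) hjj hn1.symm)
        obtain ⟨t, htodd, htlt, hte⟩ := hNint jj hjj _ (by omega) (by omega) heN (by rw [hjw]; exact (by rw [Sym2.mem_iff]; right; rfl))
        have hzt : (l[n-1]'(by omega)) ∈ s(l[t]'(by omega), l[t+1]'htlt) := by
          rw [← hte, Sym2.mem_iff]; left; rfl
        rw [Sym2.mem_iff] at hzt
        rcases hzt with h | h
        · have := hnd.getElem_inj_iff.1 h
          omega
        · have := hnd.getElem_inj_iff.1 h
          omega
      exact hext w hwl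
        (by
          constructor
          · intro hc; exact absurd hc heM
          · intro hc; omega)
        (by
          constructor
          · intro _; omega
          · intro _; exact heN)
    obtain ⟨N', hN'm, hN'c, -⟩ := aug_lemma G N hN l hlen2 hnp hnd hadjl
      (fun t h => (hedge t h).2)
      (by
        rintro ⟨e, he, hme⟩
        rw [ha0] at hme
        exact haN e he hme)
      hzN
    have := hM.2 N' hN'm
    omega
  · -- the walk ended after an M-edge: the endpoint is M-unmatched and the
    -- reversed walk (minus `a`) is an odd alternating path to `p`
    have hn3 : 3 ≤ n := by omega
    have hzM : ¬ IsMatchedBy M (l[n-1]'(by omega)) := by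
      rintro ⟨e, heM, hze⟩
      have h2 := (hedge (n-2) (by omega))
      have heq := hidx (n-2+1) (n-1) (by omega) (by omega) (by omega)
      rw [heq] at h2
      have hlastN : s(l[n-2]'(by omega), l[n-1]'(by omega)) ∈ N := h2.2.2 (by omega)
      have hlastM : s(l[n-2]'(by omega), l[n-1]'(by omega)) ∉ M := by
        intro hc
        have := h2.1.1 hc
        omega
      have heN : e ∉ N := by
        intro heN
        have := hNuniq (l[n-1]'(by omega)) e _ heN hlastN hze
          (by rw [Sym2.mem_iff]; right; rfl)
        rw [this] at heM
        exact hlastM heM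
      obtain ⟨w, rfl⟩ := Sym2.mem_iff_exists.1 hze
      have hzw : l[n-1]'(by omega) ≠ w := ((SimpleGraph.mem_edgeSet G).1 (hM.1.1 heM)).ne
      have hwl : w ∉ l := by
        intro hwl
        obtain ⟨jj, hjj, hjw⟩ := List.mem_iff_getElem.1 hwl
        have hjj0 : jj ≠ 0 := by
          intro h0
          subst h0
          rw [ha0] at hjw
          have haine : a ∈ s(l[n-1]'(by omega), w) := by
            rw [← hjw, Sym2.mem_iff]; right; rfl
          have := hMuniq a _ _ heM hap haine (by rw [Sym2.mem_iff]; left; rfl)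
          have hzin : (l[n-1]'(by omega)) ∈ s(a, p) := by
            rw [← this, Sym2.mem_iff]; left; rfl
          rw [Sym2.mem_iff] at hzin
          rcases hzin with h | h
          · rw [← ha0] at h
            have := hnd.getElem_inj_iff.1 h
            omega
          · rw [← hl1] at h
            have := hnd.getElem_inj_iff.1 h
            omega
        have hjjn : jj ≠ n - 1 := by
          intro hn1
          apply hzw
          rw [← hjw]
          exact (hidx (n-1) jj (by omega) hjj hn1.symm)
        obtain ⟨t, hteven, htlt, hte⟩ := hMint jj hjj _ (by omega) (by omega) heM (by rw [hjw]; exact (by rw [Sym2.mem_iff]; right; rfl))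
        have hzt : (l[n-1]'(by omega)) ∈ s(l[t]'(by omega), l[t+1]'htlt) := by
          rw [← hte, Sym2.mem_iff]; left; rfl
        rw [Sym2.mem_iff] at hzt
        rcases hzt with h | h
        · have := hnd.getElem_inj_iff.1 h
          omega
        · have := hnd.getElem_inj_iff.1 h
          omega
      exact hext w hwl
        (by
          constructor
          · intro _; omega
          · intro _; exact heM)
        (by
          constructor
          · intro hc; exact absurd hc heN
          · intro hc; omega)
    -- build the odd alternating path from l[n-1] to p
    refine ⟨l[n-1]'(by omega), (l.drop 1).reverse, hzM, ⟨?_, ?_, ?_, ?_, ?_⟩, ?_⟩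
    case _ => -- Chain' Adj
      change List.IsChain _ _
      rw [List.isChain_iff_getElem]
      intro i hlt
      simp only [List.get_eq_getElem, List.getElem_reverse, List.getElem_drop,
        List.length_reverse, List.length_drop] at hlt ⊢
      have e1 : 1 + (l.length - 1 - 1 - i) = n - 2 - i + 1 := by simp only [← hn]; omega
      have e2 : 1 + (l.length - 1 - 1 - (i+1)) = n - 2 - i := by simp only [← hn]; omega
      rw [hidx _ _ (by omega) (by omega) e1, hidx _ _ (by omega) (by omega) e2]
      exact (hadjl (n-2-i) (by omega)).symm
    case _ => -- Nodup
      rw [List.nodup_reverse]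
      exact (List.drop_sublist 1 l).nodup hnd
    case _ => -- alternation
      apply pattern_chain'_alt M
      intro t ht
      rw [pathEdges_getElem]
      have hlt := ht
      rw [pathEdges_length] at hlt
      simp only [List.getElem_reverse, List.getElem_drop, List.length_reverse,
        List.length_drop] at hlt ⊢
      have e1 : 1 + (l.length - 1 - 1 - t) = n - 2 - t + 1 := by simp only [← hn]; omega
      have e2 : 1 + (l.length - 1 - 1 - (t+1)) = n - 2 - t := by simp only [← hn]; omega
      rw [hidx _ _ (by omega) (by omega) e1, hidx _ _ (by omega) (by omega) e2]
      rw [Sym2.eq_swap]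
      rw [(hedge (n-2-t) (by omega)).1]
      omega
    case _ => -- head?
      have h0 : 0 < ((l.drop 1).reverse).length := by simp; omega
      rw [head?_eq_getElem _ h0]
      congr 1
      simp only [List.getElem_reverse, List.getElem_drop, List.length_reverse,
        List.length_drop]
      exact hidx _ _ (by omega) (by omega) (by simp only [← hn]; omega)
    case _ => -- getLast?
      have h0 : 0 < ((l.drop 1).reverse).length := by simp; omega
      rw [getLast?_eq_getElem _ h0]
      congr 1
      simp only [List.getElem_reverse, List.getElem_drop, List.length_reverse,
        List.length_drop]
      rw [← hl1]
      exact hidx _ _ (by omega) (by omega) (by simp only [← hn]; omega)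
    case _ => -- odd length
      rw [Nat.odd_iff, pathEdges_length]
      simp only [List.length_reverse, List.length_drop, ← hn]
      omega

lemma getElem_congr_idx' (L : List V) (i j : ℕ) (hi : i < L.length) (hj : j < L.length)
    (h : i = j) : L[i]'hi = L[j]'hj := by subst h; rfl

lemma altPath_facts (G : SimpleGraph V) (M : Set (Sym2 V)) (u v : V) (P : List V)
    (hP : IsAltPath G M u v P) (hu : ¬ IsMatchedBy M u) :
    ∃ h1 : 1 ≤ P.length, P[0]'(by omega) = u ∧ P[P.length - 1]'(by omega) = v ∧
      P.Nodup ∧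
      (∀ t (h : t + 1 < P.length), G.Adj (P[t]'(by omega)) (P[t+1]'h)) ∧
      (∀ t (h : t + 1 < P.length), (s(P[t]'(by omega), P[t+1]'h) ∈ M ↔ t % 2 = 1)) := by
  obtain ⟨hchain, hnd, halt, hhead, hlast⟩ := hP
  have h1 : 1 ≤ P.length := by
    cases P with
    | nil => simp at hhead
    | cons x t => simp
  refine ⟨h1, ?_, ?_, hnd, ?_, ?_⟩
  · have := head?_eq_getElem P (by omega)
    rw [hhead] at this
    exact (Option.some_inj.1 this).symm
  · have := getLast?_eq_getElem P (by omega)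
    rw [hlast] at this
    exact (Option.some_inj.1 this).symm
  · intro t h
    have := List.isChain_iff_getElem.1 hchain t (by omega)
    simpa using this
  · intro t h
    have hpat := chain'_alt_pattern M (pathEdges P) halt ?_ t (by rw [pathEdges_length]; omega)
    · rw [pathEdges_getElem] at hpat
      exact hpat
    · intro h0
      rw [pathEdges_getElem]
      intro hmem
      apply hu
      refine ⟨_, hmem, ?_⟩
      have hu0 : P[0]'(by omega) = u := by
        have := head?_eq_getElem P (by omega)
        rw [hhead] at this
        exact (Option.some_inj.1 this).symm
      rw [← hu0, Sym2.mem_iff]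
      left; rfl

lemma not_even_and_odd [Fintype V] (G : SimpleGraph V) (side : V → Bool)
    (hbip : IsBipartiteWith G side) (M : Set (Sym2 V)) (hM : IsMaxMatching G M)
    (a p : V) (hap : s(a, p) ∈ M)
    (hEven : EvenVtx G M p) (hOdd : OddVtx G M p) : False := by
  classical
  have hMuniq : ∀ (v : V) (e f : Sym2 V), e ∈ M → f ∈ M → v ∈ e → v ∈ f → e = f := by
    intro v e f he hf hve hvf
    by_contra hne
    exact hM.1.2 e he f hf hne v hve hvf
  have hane : a ≠ p := ((SimpleGraph.mem_edgeSet G).1 (hM.1.1 hap)).ne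
  obtain ⟨u, P, hu, hPalt, hPev⟩ := hEven
  obtain ⟨z, R, hz, hRalt, hRodd⟩ := hOdd
  obtain ⟨hP1, hPu, hPv, hPnd, hPadj, hPpat⟩ := altPath_facts G M u p P hPalt hu
  obtain ⟨hR1, hRz, hRp, hRnd, hRadj, hRpat⟩ := altPath_facts G M z p R hRalt hz
  rw [pathEdges_length] at hPev hRodd
  set nP := P.length with hnP
  set nR := R.length with hnR
  have hPodd : nP % 2 = 1 := by
    rw [Nat.even_iff] at hPev
    omega
  have hRev : nR % 2 = 0 := by
    rw [Nat.odd_iff] at hRodd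
    omega
  have hnR2 : 2 ≤ nR := by
    rcases hRodd with ⟨k, hk⟩
    omega
  have hnP3 : 3 ≤ nP := by
    rcases Nat.lt_or_ge nP 3 with h | h
    · exfalso
      have hnP1 : nP = 1 := by omega
      apply hu
      refine ⟨s(a,p), hap, ?_⟩
      have hup : u = p := by
        rw [← hPu, ← hPv]
        exact getElem_congr_idx' _ _ _ _ _ (by omega)
      rw [hup, Sym2.mem_iff]
      right; rfl
    · exact h
  set m := nP - 2 with hm
  have hmodd : m % 2 = 1 := by omega
  -- the last edge of P is s(a,p), so P[m] = a
  have hPma : P[m]'(by omega) = a := by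
    have hlast : s(P[m]'(by omega), P[m+1]'(by omega)) ∈ M := (hPpat m (by omega)).2 hmodd
    have hpm1 : P[m+1]'(by omega) = p := by
      rw [← hPv]
      exact getElem_congr_idx' _ _ _ _ _ (by omega)
    rw [hpm1] at hlast
    have heq := hMuniq p _ _ hlast hap (by rw [Sym2.mem_iff]; right; rfl)
      (by rw [Sym2.mem_iff]; right; rfl)
    rcases Sym2.eq_iff.1 heq with ⟨h1', h2'⟩ | ⟨h1', h2'⟩
    · exact h1'
    · exact absurd h2'.symm hane
  -- the combined walk
  set W : List V := R ++ (P.take (m+1)).reverse with hW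
  have hQlen : ((P.take (m+1)).reverse).length = m + 1 := by
    simp [List.length_take]
    omega
  have hWlen : W.length = nR + m + 1 := by
    simp [hW, hQlen, ← hnR]
    omega
  have hQget : ∀ s (h : s ≤ m), ((P.take (m+1)).reverse)[s]'(by rw [hQlen]; omega)
      = P[m - s]'(by omega) := by
    intro s h
    rw [List.getElem_reverse, List.getElem_take]
    exact getElem_congr_idx' _ _ _ _ _ (by rw [List.length_take]; simp [← hnP]; omega)
  have hWget1 : ∀ t (h : t < nR), W[t]'(by rw [hWlen]; omega) = R[t]'h := by
    intro t h
    simp only [hW]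
    rw [List.getElem_append]
    exact dif_pos h
  have hWget2 : ∀ s (h : s ≤ m), W[nR + s]'(by rw [hWlen]; omega) = P[m - s]'(by omega) := by
    intro s h
    simp only [hW]
    rw [List.getElem_append]
    have hns : ¬ (nR + s < R.length) := by omega
    rw [dif_neg hns]
    have : nR + s - R.length = s := by omega
    simp only [this]
    exact hQget s h
  -- apply the splice lemma
  apply splice_lemma G side hbip M hM W (by omega) (by omega)
  · -- adjacency
    intro t h
    rw [hWlen] at h
    by_cases ht1 : t + 1 < nR
    · rw [hWget1 t (by omega), hWget1 (t+1) ht1]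
      exact hRadj t ht1
    · by_cases ht2 : t < nR
      · -- t = nR - 1 : junction edge from p to a
        have htn : t = nR - 1 := by omega
        have e1 : W[t]'(by rw [hWlen]; omega) = R[t]'(by omega) := hWget1 t ht2
        have e2 : W[t+1]'(by rw [hWlen]; omega) = P[m - 0]'(by omega) := by
          have : t + 1 = nR + 0 := by omega
          simp only [this]
          exact hWget2 0 (by omega)
        rw [e1, e2]
        have hRt : R[t]'(by omega) = p := by
          rw [← hRp]
          exact getElem_congr_idx' _ _ _ _ _ (by omega)
        have hPm0 : P[m - 0]'(by omega) = a := by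
          simp only [Nat.sub_zero]
          exact hPma
        rw [hRt, hPm0]
        exact ((SimpleGraph.mem_edgeSet G).1 (hM.1.1 hap)).symm
      · -- inside reversed P
        have hs : ∃ s, t = nR + s ∧ s + 1 ≤ m := ⟨t - nR, by omega, by omega⟩
        obtain ⟨s, rfl, hsm⟩ := hs
        have e1 := hWget2 s (by omega)
        have e2 : W[nR + s + 1]'(by rw [hWlen]; omega) = P[m - (s+1)]'(by omega) := by
          have : nR + s + 1 = nR + (s + 1) := by omega
          simp only [this]
          exact hWget2 (s+1) hsm
        rw [e1, e2]
        have := hPadj (m - (s+1)) (by omega)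
        have e3 : P[m - (s+1) + 1]'(by omega) = P[m - s]'(by omega) :=
          getElem_congr_idx' _ _ _ _ _ (by omega)
        rw [e3] at this
        exact this.symm
  · -- alternation pattern
    intro t h
    rw [hWlen] at h
    by_cases ht1 : t + 1 < nR
    · rw [hWget1 t (by omega), hWget1 (t+1) ht1]
      exact hRpat t ht1
    · by_cases ht2 : t < nR
      · have htn : t = nR - 1 := by omega
        have e1 : W[t]'(by rw [hWlen]; omega) = R[t]'(by omega) := hWget1 t ht2
        have e2 : W[t+1]'(by rw [hWlen]; omega) = P[m - 0]'(by omega) := by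
          have : t + 1 = nR + 0 := by omega
          simp only [this]
          exact hWget2 0 (by omega)
        rw [e1, e2]
        have hRt : R[t]'(by omega) = p := by
          rw [← hRp]
          exact getElem_congr_idx' _ _ _ _ _ (by omega)
        have hPm0 : P[m - 0]'(by omega) = a := by
          simp only [Nat.sub_zero]
          exact hPma
        rw [hRt, hPm0]
        constructor
        · intro _; omega
        · intro _; rw [Sym2.eq_swap]; exact hap
      · have hs : ∃ s, t = nR + s ∧ s + 1 ≤ m := ⟨t - nR, by omega, by omega⟩
        obtain ⟨s, rfl, hsm⟩ := hs
        have e1 := hWget2 s (by omega)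
        have e2 : W[nR + s + 1]'(by rw [hWlen]; omega) = P[m - (s+1)]'(by omega) := by
          have : nR + s + 1 = nR + (s + 1) := by omega
          simp only [this]
          exact hWget2 (s+1) hsm
        rw [e1, e2]
        have hPedge := hPpat (m - (s+1)) (by omega)
        have e3 : P[m - (s+1) + 1]'(by omega) = P[m - s]'(by omega) :=
          getElem_congr_idx' _ _ _ _ _ (by omega)
        rw [e3] at hPedge
        rw [Sym2.eq_swap]
        rw [hPedge]
        omega
  · -- start unmatched
    have : W[0]'(by rw [hWlen]; omega) = R[0]'(by omega) := hWget1 0 (by omega)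
    rw [this, hRz]
    exact hz
  · -- end unmatched
    have e0 : W.length - 1 = nR + m := by omega
    have : W[W.length - 1]'(by omega) = P[m - m]'(by omega) := by
      simp only [e0]
      exact hWget2 m le_rfl
    rw [this]
    have : P[m - m]'(by omega) = u := by
      rw [← hPu]
      exact getElem_congr_idx' _ _ _ _ _ (by omega)
    rw [this]
    exact hu

lemma empty_matching (G : SimpleGraph V) : IsMatchingIn G ∅ :=
  ⟨Set.empty_subset _, fun e he => absurd he (Set.notMem_empty e)⟩

/-- Let `M` be a maximum matching of the bipartite graph `G`, let
`a` be matched in `M` with partner `p`, and let `H` be obtained from `G` by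
deleting `a` and all edges incident on it. Then the maximum matching size of `H`
equals that of `G` if and only if `p` is odd with respect to `M` in `G`; and if
`p` is even or unreachable with respect to `M` in `G`, then `M \ {s(a,p)}` is a
maximum matching of `H` (so the maximum matching size drops by exactly one). -/
theorem delete_matched_vertex [Fintype V]
    (G H : SimpleGraph V) (side : V → Bool) (hbip : IsBipartiteWith G side)
    (M : Set (Sym2 V)) (hM : IsMaxMatching G M)
    (a p : V) (hap : s(a, p) ∈ M)
    (hH : ∀ u v, H.Adj u v ↔ G.Adj u v ∧ u ≠ a ∧ v ≠ a) :
    (matchNum H = matchNum G ↔ OddVtx G M p) ∧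
    ((EvenVtx G M p ∨ UnreachableVtx G M p) →
      (IsMaxMatching H (M \ {s(a, p)}) ∧ matchNum H + 1 = matchNum G)) := by
  classical
  have hMuniq : ∀ (v : V) (e f : Sym2 V), e ∈ M → f ∈ M → v ∈ e → v ∈ f → e = f := by
    intro v e f he hf hve hvf
    by_contra hne
    exact hM.1.2 e he f hf hne v hve hvf
  have hapG : G.Adj a p := (SimpleGraph.mem_edgeSet G).1 (hM.1.1 hap)
  have hane : a ≠ p := hapG.ne
  -- edges of H avoid a and lie in G
  have hHedge : ∀ e ∈ H.edgeSet, e ∈ G.edgeSet ∧ a ∉ e := by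
    intro e
    induction e using Sym2.ind with
    | _ x y =>
      intro he
      rw [SimpleGraph.mem_edgeSet] at he
      rw [hH] at he
      refine ⟨(SimpleGraph.mem_edgeSet G).2 he.1, ?_⟩
      rw [Sym2.mem_iff]
      push_neg
      exact ⟨fun hxa => he.2.1 hxa.symm, fun hya => he.2.2 hya.symm⟩
  have hGtoH : ∀ e ∈ G.edgeSet, a ∉ e → e ∈ H.edgeSet := by
    intro e
    induction e using Sym2.ind with
    | _ x y =>
      intro he ha
      rw [Sym2.mem_iff] at ha
      push_neg at ha
      rw [SimpleGraph.mem_edgeSet] at he ⊢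
      rw [hH]
      exact ⟨he, fun h => ha.1 h.symm, fun h => ha.2 h.symm⟩
  have hHtoG : ∀ N, IsMatchingIn H N → IsMatchingIn G N ∧ ∀ e ∈ N, a ∉ e :=
    fun N hN => ⟨⟨fun e he => (hHedge e (hN.1 he)).1, hN.2⟩,
      fun e he => (hHedge e (hN.1 he)).2⟩
  -- M' = M \ {s(a,p)} is a matching in H
  have hM'm : IsMatchingIn H (M \ {s(a, p)}) := by
    constructor
    · intro e he
      apply hGtoH e (hM.1.1 he.1)
      intro hae
      apply he.2
      have := hMuniq a e s(a,p) he.1 hap hae (by rw [Sym2.mem_iff]; left; rfl)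
      simp [this]
    · intro e he f hf hef v hve hvf
      exact hM.1.2 e he.1 f hf.1 hef v hve hvf
  have hMfin : M.Finite := Set.toFinite M
  have hM'c : (M \ {s(a, p)}).ncard + 1 = M.ncard :=
    Set.ncard_diff_singleton_add_one hap hMfin
  have hM1 : 1 ≤ M.ncard := by
    have : M.Nonempty := ⟨_, hap⟩
    have := Set.ncard_pos hMfin
    omega
  -- matchNum G = M.ncard
  have hTGne : {n | ∃ N, IsMatchingIn G N ∧ n = N.ncard}.Nonempty := ⟨M.ncard, M, hM.1, rfl⟩
  have hTGbdd : BddAbove {n | ∃ N, IsMatchingIn G N ∧ n = N.ncard} := by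
    refine ⟨M.ncard, ?_⟩
    rintro nn ⟨N, hN, rfl⟩
    exact hM.2 N hN
  have hmnG : matchNum G = M.ncard := by
    apply le_antisymm
    · apply csSup_le hTGne
      rintro nn ⟨N, hN, rfl⟩
      exact hM.2 N hN
    · exact le_csSup hTGbdd ⟨M, hM.1, rfl⟩
  have hTHbdd : BddAbove {n | ∃ N, IsMatchingIn H N ∧ n = N.ncard} := by
    refine ⟨M.ncard, ?_⟩
    rintro nn ⟨N, hN, rfl⟩
    exact hM.2 N (hHtoG N hN).1
  have hTHne : {n | ∃ N, IsMatchingIn H N ∧ n = N.ncard}.Nonempty :=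
    ⟨0, ∅, empty_matching H, by simp⟩
  have hmnHle : matchNum H ≤ M.ncard := by
    apply csSup_le hTHne
    rintro nn ⟨N, hN, rfl⟩
    exact hM.2 N (hHtoG N hN).1
  have hmnHge : (M \ {s(a, p)}).ncard ≤ matchNum H :=
    le_csSup hTHbdd ⟨M \ {s(a, p)}, hM'm, rfl⟩
  have hmnHmem : ∃ N, IsMatchingIn H N ∧ matchNum H = N.ncard :=
    Nat.sSup_mem hTHne hTHbdd
  -- main equivalence
  have hiff : matchNum H = matchNum G ↔ OddVtx G M p := by
    constructor
    · intro heq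
      obtain ⟨N, hN, hNc⟩ := hmnHmem
      obtain ⟨hNG, hNa⟩ := hHtoG N hN
      exact exists_oddVtx G M hM N hNG (by omega) a p hap hNa
    · rintro ⟨z, P, hz, hPalt, hPodd⟩
      obtain ⟨hP1, hPz, hPp, hPnd, hPadj, hPpat⟩ := altPath_facts G M z p P hPalt hz
      rw [pathEdges_length] at hPodd
      rw [Nat.odd_iff] at hPodd
      set nP := P.length with hnP
      have hnPev : nP % 2 = 0 := by omega
      have hnP2 : 2 ≤ nP := by omega
      -- a is not on P
      have haP : a ∉ P := by
        intro haP
        obtain ⟨i, hi, hia⟩ := List.mem_iff_getElem.1 haP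
        have hi0 : i ≠ 0 := by
          intro h0
          subst h0
          apply hz
          rw [← hPz]
          exact ⟨s(a,p), hap, by rw [hia, Sym2.mem_iff]; left; rfl⟩
        have hin : i ≠ nP - 1 := by
          intro h0
          apply hane
          rw [← hia, ← hPp]
          exact getElem_congr_idx' _ _ _ _ _ h0
        obtain ⟨t, htodd, htlt, htv⟩ :
            ∃ t, t % 2 = 1 ∧ ∃ htlt : t + 1 < nP, (P[i]'hi) ∈ s(P[t]'(by omega), P[t+1]'htlt) := by
          by_cases hpar : i % 2 = 1
          · refine ⟨i, hpar, by omega, ?_⟩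
            rw [Sym2.mem_iff]; left; rfl
          · refine ⟨i - 1, by omega, by omega, ?_⟩
            rw [Sym2.mem_iff]; right
            exact (getElem_congr_idx' P i (i-1+1) hi (by omega) (by omega)).symm ▸ rfl
        have hteM : s(P[t]'(by omega), P[t+1]'htlt) ∈ M := (hPpat t htlt).2 htodd
        have hedgeEq := hMuniq a s(a,p) _ hap hteM (by rw [Sym2.mem_iff]; left; rfl) (hia ▸ htv)
        have hpmem : p ∈ s(P[t]'(by omega), P[t+1]'htlt) := by
          rw [← hedgeEq, Sym2.mem_iff]; right; rfl
        rw [Sym2.mem_iff] at hpmem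
        rcases hpmem with h | h
        · rw [← hPp] at h
          have := hPnd.getElem_inj_iff.1 h.symm
          omega
        · rw [← hPp] at h
          have := hPnd.getElem_inj_iff.1 h.symm
          omega
      -- augment M \ {s(a,p)} along P to get a matching of H of full size
      set N₀ : Set (Sym2 V) := M \ {s(a,p)} with hN₀
      have hN₀m : IsMatchingIn G N₀ :=
        ⟨fun e he => hM.1.1 he.1, fun e he f hf hef v hve hvf => hM.1.2 e he.1 f hf.1 hef v hve hvf⟩
      have haN₀ : ∀ e ∈ N₀, a ∉ e := by
        intro e he hae
        apply he.2
        have := hMuniq a e s(a,p) he.1 hap hae (by rw [Sym2.mem_iff]; left; rfl)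
        simp [this]
      have hpN₀ : ¬ IsMatchedBy N₀ (P[nP-1]'(by omega)) := by
        rw [hPp]
        rintro ⟨e, he, hpe⟩
        apply he.2
        have := hMuniq p e s(a,p) he.1 hap hpe (by rw [Sym2.mem_iff]; right; rfl)
        simp [this]
      have hzN₀ : ¬ IsMatchedBy N₀ (P[0]'(by omega)) := by
        rw [hPz]
        rintro ⟨e, he, hze⟩
        exact hz ⟨e, he.1, hze⟩
      obtain ⟨N', hN'm, hN'c, hN'avoid⟩ := aug_lemma G N₀ hN₀m P hnP2 hnPev hPnd hPadj
        (fun t ht => by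
          rw [hN₀]
          constructor
          · intro hc
            exact (hPpat t ht).1 hc.1
          · intro hodd
            refine ⟨(hPpat t ht).2 hodd, ?_⟩
            intro hc
            rw [Set.mem_singleton_iff] at hc
            rcases Sym2.eq_iff.1 hc with ⟨h1, h2⟩ | ⟨h1, h2⟩
            · exact haP (h1 ▸ List.getElem_mem _)
            · exact haP (h2 ▸ List.getElem_mem _))
        hzN₀ hpN₀
      have hN'a : ∀ e ∈ N', a ∉ e := fun e he hae => hN'avoid a haN₀ haP e he hae
      have hN'H : IsMatchingIn H N' :=
        ⟨fun e he => hGtoH e (hN'm.1 he) (hN'a e he), hN'm.2⟩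
      have hle : N'.ncard ≤ matchNum H := le_csSup hTHbdd ⟨N', hN'H, rfl⟩
      omega
  refine ⟨hiff, ?_⟩
  intro hEU
  have hnotodd : ¬ OddVtx G M p := by
    rcases hEU with hE | hU
    · intro hO
      exact not_even_and_odd G side hbip M hM a p hap hE hO
    · rintro ⟨u, P, hu, hPalt, -⟩
      exact hU ⟨u, P, hu, hPalt⟩
  have hne : matchNum H ≠ matchNum G := fun h => hnotodd (hiff.1 h)
  constructor
  · refine ⟨hM'm, ?_⟩
    intro N hN
    have hNle : N.ncard ≤ matchNum H := le_csSup hTHbdd ⟨N, hN, rfl⟩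
    omega
  · omega
end
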